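/- Let r be positive and non-increasing on (x', x*). Then for any initial guess x₀ ∈ (x', x*), the modified Halley iterates x_{n+1} = x_n − 2h(x_n)/(2 + r(x₀)h(x_n)²) increase monotonically and converge to x*. -/

import Mathlib

lemma aux_same_sign {g : ℝ → ℝ} (hc : Continuous g) {a b : ℝ}
    (hS : ∀ t ∈ Set.uIcc a b, g t ≠ 0) (ha : 0 < g a) : 0 < g b := by
  by_contra hb
  push_neg at hb
  have h0 : (0:ℝ) ∈ Set.uIcc (g a) (g b) := Set.mem_uIcc.2 (Or.inr ⟨hb, ha.le⟩)
  obtain ⟨c, hc1, hc2⟩ := intermediate_value_uIcc (hc.continuousOn) h0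
  exact hS c hc1 hc2

lemma aux_arctan_key (s : ℝ) (hs : 0 < s) : 2*s/(2+s^2) < Real.arctan s := by
  set ψ : ℝ → ℝ := fun u => Real.arctan u - 2*u/(2+u^2) with hψ
  have hder : ∀ u : ℝ, HasDerivAt ψ ((2*u^2+3*u^4)/((1+u^2)*(2+u^2)^2)) u := by
    intro u
    have h1 : HasDerivAt (fun v : ℝ => 2*v) 2 u := by simpa using (hasDerivAt_id u).const_mul 2
    have h2 : HasDerivAt (fun v : ℝ => 2+v^2) (2*u) u := by
      simpa using ((hasDerivAt_pow 2 u).const_add 2)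
    have hne : (2+u^2 : ℝ) ≠ 0 := by positivity
    have h3 := h1.div h2 hne
    have h4 := (Real.hasDerivAt_arctan u).sub h3
    refine h4.congr_deriv ?_
    have hne1 : (1+u^2 : ℝ) ≠ 0 := by positivity
    field_simp
    ring
  have hcont : Continuous ψ := by
    apply Real.continuous_arctan.sub
    apply Continuous.div (by continuity) (by continuity)
    intro v; positivity
  have hmono : StrictMonoOn ψ (Set.Ici 0) := by
    apply strictMonoOn_of_deriv_pos (convex_Ici 0) hcont.continuousOn
    intro u hu
    rw [interior_Ici] at hu
    rw [(hder u).deriv]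
    have hu0 : 0 < u := hu
    positivity
  have := hmono (Set.self_mem_Ici) (Set.mem_Ici.2 hs.le) hs
  simp [hψ, Real.arctan_zero] at this
  linarith

lemma aux_step (h c R : ℝ) (hc : 0 < c) (hc2 : c^2 = R) (hden : 0 < 2 + R * h^2) :
    -(2 * h / (2 + R * h^2)) = (2*(-(c*h))/(2+(-(c*h))^2))/c := by
  have hs2 : (-(c*h))^2 = R * h^2 := by rw [neg_pow, mul_pow, hc2]; ring
  rw [hs2]
  field_simp

theorem modified_halley_nonlocal_convergence (r f : ℝ → ℝ) (x' x'' xs x₀ : ℝ) (x : ℕ → ℝ)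
    (hr : ContDiff ℝ 1 r)
    (hf1 : Differentiable ℝ f) (hf2 : Differentiable ℝ (deriv f))
    (hode : ∀ t ∈ Set.Ioo x' x'', deriv (deriv f) t + r t * f t = 0)
    (hnt : ∃ t ∈ Set.Ioo x' x'', f t ≠ 0)
    (hlt : x' < x'')
    (hz' : deriv f x' = 0) (hz'' : deriv f x'' = 0)
    (hcons : ∀ t ∈ Set.Ioo x' x'', deriv f t ≠ 0)
    (hxs : xs ∈ Set.Ioo x' x'') (hfxs : f xs = 0)
    (huniq : ∀ t ∈ Set.Ioo x' x'', f t = 0 → t = xs)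
    (hrpos : ∀ t ∈ Set.Ioo x' xs, 0 < r t)
    (hrdec : ∀ t ∈ Set.Ioo x' xs, deriv r t ≤ 0)
    (hx0 : x₀ ∈ Set.Ioo x' xs)
    (hseq0 : x 0 = x₀)
    (hseq : ∀ n, x (n + 1) = x n
      - 2 * (f (x n) / deriv f (x n)) / (2 + r x₀ * (f (x n) / deriv f (x n)) ^ 2)) :
    Monotone x ∧ (∀ n, x n < xs) ∧ Filter.Tendsto x Filter.atTop (nhds xs) := by
  obtain ⟨hx'0, h0s⟩ := hx0
  obtain ⟨hxs1, hxs2⟩ := hxs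
  have hfc : Continuous f := hf1.continuous
  have hf'c : Continuous (deriv f) := hf2.continuous
  have hr0 : 0 < r x₀ := hrpos x₀ ⟨hx'0, h0s⟩
  -- subset facts
  have hIoosub : Set.Ioo x' xs ⊆ Set.Ioo x' x'' := Set.Ioo_subset_Ioo le_rfl hxs2.le
  -- sign of f' constant
  have hsign : (∀ t ∈ Set.Ioo x' x'', 0 < deriv f t) ∨ (∀ t ∈ Set.Ioo x' x'', deriv f t < 0) := by
    rcases (Ne.lt_or_gt (hcons xs ⟨hxs1, hxs2⟩)) with hneg | hpos
    · right
      intro t ht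
      have : 0 < -deriv f t := by
        apply aux_same_sign (g := fun u => -deriv f u) hf'c.neg _ (by simpa using hneg)
        intro u hu
        have : u ∈ Set.Ioo x' x'' := (Set.ordConnected_Ioo.uIcc_subset ⟨hxs1, hxs2⟩ ht) hu
        simpa using hcons u this
      linarith
    · left
      intro t ht
      apply aux_same_sign hf'c _ hpos
      intro u hu
      exact hcons u ((Set.ordConnected_Ioo.uIcc_subset ⟨hxs1, hxs2⟩ ht) hu)
  -- product sign
  have hprod : ∀ t ∈ Set.Ioo x' xs, f t * deriv f t < 0 := by
    intro t ht
    have htI : t ∈ Set.Ioo x' x'' := hIoosub ht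
    rcases hsign with hp | hn
    · have hmono : StrictMonoOn f (Set.Icc t xs) := by
        apply strictMonoOn_of_deriv_pos (convex_Icc _ _) hfc.continuousOn
        intro u hu
        rw [interior_Icc] at hu
        exact hp u ⟨lt_trans ht.1 hu.1, lt_trans hu.2 hxs2⟩
      have : f t < f xs := hmono ⟨le_rfl, ht.2.le⟩ ⟨ht.2.le, le_rfl⟩ ht.2
      rw [hfxs] at this
      exact mul_neg_of_neg_of_pos this (hp t htI)
    · have hmono : StrictAntiOn f (Set.Icc t xs) := by
        apply strictAntiOn_of_deriv_neg (convex_Icc _ _) hfc.continuousOn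
        intro u hu
        rw [interior_Icc] at hu
        exact hn u ⟨lt_trans ht.1 hu.1, lt_trans hu.2 hxs2⟩
      have : f xs < f t := hmono ⟨le_rfl, ht.2.le⟩ ⟨ht.2.le, le_rfl⟩ ht.2
      rw [hfxs] at this
      exact mul_neg_of_pos_of_neg this (hn t htI)
  -- h < 0
  have hhneg : ∀ t ∈ Set.Ioo x' xs, f t / deriv f t < 0 := by
    intro t ht
    have hne := hcons t (hIoosub ht)
    have heq : f t / deriv f t = (f t * deriv f t) / (deriv f t)^2 := by
      rw [pow_two]
      field_simp
    rw [heq]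
    exact div_neg_of_neg_of_pos (hprod t ht) (by positivity)
  -- derivative of h
  have hder : ∀ t ∈ Set.Ioo x' x'', HasDerivAt (fun s => f s / deriv f s)
      (1 + r t * (f t / deriv f t)^2) t := by
    intro t ht
    have hne := hcons t ht
    have h1 : HasDerivAt f (deriv f t) t := (hf1 t).hasDerivAt
    have h2 : HasDerivAt (deriv f) (deriv (deriv f) t) t := (hf2 t).hasDerivAt
    have h3 := h1.div h2 hne
    refine h3.congr_deriv ?_
    have hode' : deriv (deriv f) t = -(r t * f t) := by linarith [hode t ht]
    rw [hode']
    field_simp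
    ring
  set c := Real.sqrt (r x₀) with hcdef
  have hc : 0 < c := Real.sqrt_pos.2 hr0
  have hc2 : c^2 = r x₀ := Real.sq_sqrt hr0.le
  -- r antitone
  have hrle : ∀ t ∈ Set.Icc x₀ xs, r t ≤ r x₀ := by
    have hanti : AntitoneOn r (Set.Icc x₀ xs) := by
      apply antitoneOn_of_deriv_nonpos (convex_Icc _ _) (hr.continuous.continuousOn)
      · intro u _
        exact ((hr.differentiable one_ne_zero) u).differentiableWithinAt
      · intro u hu
        rw [interior_Icc] at hu
        exact hrdec u ⟨lt_trans hx'0 hu.1, hu.2⟩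
    intro t ht
    exact hanti ⟨le_rfl, h0s.le⟩ ht ht.1
  -- G and its derivative
  set G : ℝ → ℝ := fun t => -Real.arctan (c * (f t / deriv f t)) + c * t with hGdef
  have hGder : ∀ t ∈ Set.Ioo x' x'', HasDerivAt G
      (c - c * ((1 + r t * (f t / deriv f t)^2) / (1 + r x₀ * (f t / deriv f t)^2))) t := by
    intro t ht
    have hin : HasDerivAt (fun s => c * (f s / deriv f s))
        (c * (1 + r t * (f t / deriv f t)^2)) t := (hder t ht).const_mul c
    have harc := (Real.hasDerivAt_arctan (c * (f t / deriv f t))).comp t hin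
    have hlin : HasDerivAt (fun s : ℝ => c * s) c t := by simpa using (hasDerivAt_id t).const_mul c
    have h4 := harc.neg.add hlin
    refine h4.congr_deriv ?_
    have hsq : (c * (f t / deriv f t))^2 = r x₀ * (f t / deriv f t)^2 := by
      rw [mul_pow, hc2]
    rw [hsq]
    have hpos : (0:ℝ) < 1 + r x₀ * (f t / deriv f t)^2 := by
      have := mul_nonneg hr0.le (sq_nonneg (f t / deriv f t))
      linarith
    field_simp
    ring
  -- key per-step estimate
  have hkey : ∀ t, x' < t → x₀ ≤ t → t < xs →
      t < t - 2 * (f t / deriv f t) / (2 + r x₀ * (f t / deriv f t)^2) ∧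
      t - 2 * (f t / deriv f t) / (2 + r x₀ * (f t / deriv f t)^2) < xs := by
    intro t ht1 ht2 ht3
    have hh : f t / deriv f t < 0 := hhneg t ⟨ht1, ht3⟩
    have hden : 0 < 2 + r x₀ * (f t / deriv f t)^2 := by
      have := mul_nonneg hr0.le (sq_nonneg (f t / deriv f t))
      linarith
    constructor
    · have : 2 * (f t / deriv f t) / (2 + r x₀ * (f t / deriv f t)^2) < 0 :=
        div_neg_of_neg_of_pos (by linarith) hden
      linarith
    · have hsub : Set.Icc t xs ⊆ Set.Ioo x' x'' := fun u hu =>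
        ⟨lt_of_lt_of_le ht1 hu.1, lt_of_le_of_lt hu.2 hxs2⟩
      have hmonG : MonotoneOn G (Set.Icc t xs) := by
        apply monotoneOn_of_deriv_nonneg (convex_Icc _ _)
        · intro u hu
          exact ((hGder u (hsub hu)).continuousAt).continuousWithinAt
        · intro u hu
          rw [interior_Icc] at hu
          exact ((hGder u (hsub (Set.Ioo_subset_Icc_self hu))).differentiableAt).differentiableWithinAt
        · intro u hu
          rw [interior_Icc] at hu
          rw [(hGder u (hsub (Set.Ioo_subset_Icc_self hu))).deriv]
          have hru : r u ≤ r x₀ := hrle u ⟨le_of_lt (lt_of_le_of_lt ht2 hu.1), hu.2.le⟩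
          have hpos : (0:ℝ) < 1 + r x₀ * (f u / deriv f u)^2 := by
            have := mul_nonneg hr0.le (sq_nonneg (f u / deriv f u))
            linarith
        
          have hratio : (1 + r u * (f u / deriv f u)^2) / (1 + r x₀ * (f u / deriv f u)^2) ≤ 1 := by
            rw [div_le_one hpos]
            have := mul_le_mul_of_nonneg_right hru (sq_nonneg (f u / deriv f u))
            linarith
          nlinarith [hc.le]
      have hGle : G t ≤ G xs := hmonG ⟨le_rfl, ht3.le⟩ ⟨ht3.le, le_rfl⟩ ht3.le
      have hGxs : G xs = c * xs := by
        simp [hGdef, hfxs]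
      set s := -(c * (f t / deriv f t)) with hsdef
      have hs : 0 < s := by
        rw [hsdef]
        have := mul_neg_of_pos_of_neg hc hh
        linarith
      have hθ : Real.arctan s ≤ c * (xs - t) := by
        have hGt : -Real.arctan (c * (f t / deriv f t)) + c * t ≤ c * xs := by
          rw [← hGxs]; exact hGle
        rw [hsdef, Real.arctan_neg]
        linarith
      have harc : 2*s/(2+s^2) < Real.arctan s := aux_arctan_key s hs
      have hs2 : s^2 = r x₀ * (f t / deriv f t)^2 := by
        rw [hsdef, neg_pow, mul_pow, hc2]
        ring
      have hstep : -(2 * (f t / deriv f t) / (2 + r x₀ * (f t / deriv f t)^2))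
          = (2*s/(2+s^2))/c := by
        have := aux_step (f t / deriv f t) c (r x₀) hc hc2 hden
        rw [← hsdef] at this
        exact this
      have hlt2 : 2*s/(2+s^2) < c * (xs - t) := lt_of_lt_of_le harc hθ
      have hlt3 : (2*s/(2+s^2))/c < xs - t := by
        rw [div_lt_iff₀ hc]
        linarith [hlt2]
      linarith [hstep, hlt3]
  -- invariant
  have hinv : ∀ n, x' < x n ∧ x₀ ≤ x n ∧ x n < xs := by
    intro n
    induction n with
    | zero => rw [hseq0]; exact ⟨hx'0, le_rfl, h0s⟩
    | succ n ih =>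
      obtain ⟨h1, h2, h3⟩ := ih
      obtain ⟨hlt', hlt''⟩ := hkey (x n) h1 h2 h3
      rw [hseq n]
      exact ⟨lt_trans h1 hlt', h2.trans hlt'.le, hlt''⟩
  have hmono : Monotone x := by
    apply monotone_nat_of_le_succ
    intro n
    obtain ⟨h1, h2, h3⟩ := hinv n
    rw [hseq n]
    exact (hkey (x n) h1 h2 h3).1.le
  have hbdd : BddAbove (Set.range x) := by
    refine ⟨xs, ?_⟩
    rintro _ ⟨n, rfl⟩
    exact (hinv n).2.2.le
  have htend : Filter.Tendsto x Filter.atTop (nhds (⨆ n, x n)) :=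
    tendsto_atTop_ciSup hmono hbdd
  set L := ⨆ n, x n with hLdef
  have hL1 : x₀ ≤ L := by
    rw [← hseq0]
    exact le_ciSup hbdd 0
  have hL2 : L ≤ xs := ciSup_le fun n => (hinv n).2.2.le
  have hLIoo : L ∈ Set.Ioo x' x'' := ⟨lt_of_lt_of_le hx'0 hL1, lt_of_le_of_lt hL2 hxs2⟩
  have hfL' : deriv f L ≠ 0 := hcons L hLIoo
  have hdenL : (0:ℝ) < 2 + r x₀ * (f L / deriv f L)^2 := by
    have := mul_nonneg hr0.le (sq_nonneg (f L / deriv f L))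
    linarith
  have hgc : ContinuousAt (fun t => t - 2 * (f t / deriv f t) / (2 + r x₀ * (f t / deriv f t)^2)) L := by
    have hq : ContinuousAt (fun t => f t / deriv f t) L :=
      (hfc.continuousAt).div (hf'c.continuousAt) hfL'
    apply ContinuousAt.sub continuousAt_id
    apply ContinuousAt.div (hq.const_mul 2)
    · exact (((hq.pow 2).const_mul (r x₀)).const_add 2)
    · exact hdenL.ne'
  have htend1 : Filter.Tendsto (fun n => x (n + 1)) Filter.atTop (nhds L) :=
    htend.comp (Filter.tendsto_add_atTop_nat 1)
  have htend2 : Filter.Tendsto (fun n => x (n + 1)) Filter.atTop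
      (nhds (L - 2 * (f L / deriv f L) / (2 + r x₀ * (f L / deriv f L)^2))) := by
    have heq : (fun n => x (n + 1))
        = (fun t => t - 2 * (f t / deriv f t) / (2 + r x₀ * (f t / deriv f t)^2)) ∘ x := by
      funext n
      exact hseq n
    rw [heq]
    exact (hgc.tendsto).comp htend
  have hgL : L - 2 * (f L / deriv f L) / (2 + r x₀ * (f L / deriv f L)^2) = L :=
    tendsto_nhds_unique htend2 htend1
  have hfL0 : f L = 0 := by
    have h1 : 2 * (f L / deriv f L) / (2 + r x₀ * (f L / deriv f L)^2) = 0 := by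
      linarith [hgL]
    have h2 : 2 * (f L / deriv f L) = 0 := by
      rcases div_eq_zero_iff.1 h1 with h | h
      · exact h
      · exact absurd h hdenL.ne'
    have h3 : f L / deriv f L = 0 := by linarith
    rcases div_eq_zero_iff.1 h3 with h | h
    · exact h
    · exact absurd h hfL'
  have hLeq : L = xs := huniq L hLIoo hfL0
  rw [hLeq] at htend
  exact ⟨hmono, fun n => (hinv n).2.2, htend⟩
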